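/- arXiv:1705.05135 — 4 statements merged into one kernel-verified Lean document; each statement's English description precedes it below -/
import Mathlib

section
/- The capacitary inequality: for any function f vanishing on B, ∫₀^∞ 2t · cap(A_t, B) dt ≤ 4 E(f), where A_t = {x : |f(x)| > t} is the super level-set of f. -/
open MeasureTheory
open scoped ENNReal

/-- The Dirichlet form `E(f) = (1/2) ∑_{x,y} μ(x) p(x,y) (f(x) − f(y))²`. -/
noncomputable def dirichletForm {S : Type*} (μ : S → ℝ) (p : S → S → ℝ) (f : S → ℝ) : ℝ≥0∞ :=
  (1/2 : ℝ≥0∞) * ∑' q : S × S, ENNReal.ofReal (μ q.1 * p q.1 q.2 * (f q.1 - f q.2) ^ 2)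

/-- The capacity `cap(A,B) = inf{E(f) : f|_A = 1, f|_B = 0, 0 ≤ f ≤ 1}`. -/
noncomputable def capacity {S : Type*} (μ : S → ℝ) (p : S → S → ℝ) (A B : Set S) : ℝ≥0∞ :=
  ⨅ f : {f : S → ℝ // (∀ x ∈ A, f x = 1) ∧ (∀ x ∈ B, f x = 0) ∧ ∀ x, 0 ≤ f x ∧ f x ≤ 1},
    dirichletForm μ p f.1

section Aux
open Set

lemma key0 {a b : ℝ} (hb : 0 ≤ b) (hba : b ≤ a) (ha : 0 < a) :
    ∫⁻ t in Set.Ioi (0:ℝ),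
      ENNReal.ofReal (2 * t * (min 1 (a ^ 2 / t ^ 2) - min 1 (b ^ 2 / t ^ 2)) ^ 2)
      ≤ ENNReal.ofReal (4 * (a - b) ^ 2) := by
  have hC0 : 0 ≤ 2 * (a ^ 2 - b ^ 2) / a := by
    apply div_nonneg _ ha.le; nlinarith
  have hsplit : Set.Ioi (0:ℝ) = Set.Ioc 0 a ∪ Set.Ioi a := (Set.Ioc_union_Ioi_eq_Ioi ha.le).symm
  rw [hsplit, lintegral_union measurableSet_Ioi Set.Ioc_disjoint_Ioi_same]
  have piece1 : ∫⁻ t in Set.Ioc (0:ℝ) a,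
      ENNReal.ofReal (2 * t * (min 1 (a ^ 2 / t ^ 2) - min 1 (b ^ 2 / t ^ 2)) ^ 2)
      ≤ ENNReal.ofReal ((2 * (a ^ 2 - b ^ 2) / a) * ((a - b) ^ 2 / a)) := by
    have hmono : ∫⁻ t in Set.Ioc (0:ℝ) a,
        ENNReal.ofReal (2 * t * (min 1 (a ^ 2 / t ^ 2) - min 1 (b ^ 2 / t ^ 2)) ^ 2)
        ≤ ∫⁻ t in Set.Ioc (0:ℝ) a,
          ENNReal.ofReal ((2 * (a ^ 2 - b ^ 2) / a) * (1 - min 1 (b ^ 2 / t ^ 2))) := by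
      apply lintegral_mono_ae
      rw [ae_restrict_iff' measurableSet_Ioc]
      refine Filter.Eventually.of_forall (fun t ht => ?_)
      obtain ⟨ht0, hta⟩ := ht
      have h1 : min 1 (a ^ 2 / t ^ 2) = 1 := by
        apply min_eq_left
        rw [le_div_iff₀ (by positivity), one_mul]
        exact pow_le_pow_left₀ ht0.le hta 2
      rw [h1]
      apply ENNReal.ofReal_le_ofReal
      have hm1 : min 1 (b ^ 2 / t ^ 2) ≤ 1 := min_le_left _ _
      have hm0 : 0 ≤ min 1 (b ^ 2 / t ^ 2) := le_min zero_le_one (by positivity)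
      rcases le_or_gt (1:ℝ) (b ^ 2 / t ^ 2) with h | h
      · rw [min_eq_left h]; norm_num
      · rw [min_eq_right h.le]
        have hbt : b ≤ t := by
          nlinarith [(div_lt_one (by positivity : (0:ℝ) < t ^ 2)).mp h]
        have e1 : 2 * t * (1 - b ^ 2 / t ^ 2) = 2 * (t - b ^ 2 / t) := by
          field_simp
          try ring
        have e2 : 2 * (a ^ 2 - b ^ 2) / a = 2 * (a - b ^ 2 / a) := by
          field_simp
          try ring
        have hdd : b ^ 2 / a ≤ b ^ 2 / t := by gcongr
        have key : 2 * t * (1 - b ^ 2 / t ^ 2) ≤ 2 * (a ^ 2 - b ^ 2) / a := by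
          rw [e1, e2]; linarith
        have hu : 0 ≤ 1 - b ^ 2 / t ^ 2 := by
          rw [sub_nonneg]; exact h.le
        nlinarith [mul_le_mul_of_nonneg_right key hu]
    refine hmono.trans (le_of_eq ?_)
    rcases eq_or_lt_of_le hb with hb0 | hb0
    · -- b = 0
      have hcong : ∀ t ∈ Set.Ioc (0:ℝ) a,
          ENNReal.ofReal ((2 * (a ^ 2 - b ^ 2) / a) * (1 - min 1 (b ^ 2 / t ^ 2)))
          = ENNReal.ofReal (2 * (a ^ 2 - b ^ 2) / a) := by
        intro t ht
        rw [← hb0]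
        norm_num
      rw [setLIntegral_congr_fun measurableSet_Ioc hcong, setLIntegral_const,
        Real.volume_Ioc, ← ENNReal.ofReal_mul hC0]
      congr 1
      rw [← hb0]
      field_simp
      try ring
    · -- b > 0
      have hsplit2 : Set.Ioc (0:ℝ) a = Set.Ioc 0 b ∪ Set.Ioc b a :=
        (Set.Ioc_union_Ioc_eq_Ioc hb hba).symm
      rw [hsplit2, lintegral_union measurableSet_Ioc (Set.Ioc_disjoint_Ioc_of_le le_rfl)]
      have hz : ∀ t ∈ Set.Ioc (0:ℝ) b,
          ENNReal.ofReal ((2 * (a ^ 2 - b ^ 2) / a) * (1 - min 1 (b ^ 2 / t ^ 2)))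
          = (fun _ : ℝ => (0 : ℝ≥0∞)) t := by
        intro t ⟨ht0, htb⟩
        have : min 1 (b ^ 2 / t ^ 2) = 1 := by
          apply min_eq_left
          rw [le_div_iff₀ (by positivity), one_mul]
          exact pow_le_pow_left₀ ht0.le htb 2
        rw [this]
        simp
      rw [setLIntegral_congr_fun measurableSet_Ioc hz, lintegral_zero, zero_add]
      have hcong : ∀ t ∈ Set.Ioc b a,
          ENNReal.ofReal ((2 * (a ^ 2 - b ^ 2) / a) * (1 - min 1 (b ^ 2 / t ^ 2)))
          = ENNReal.ofReal ((2 * (a ^ 2 - b ^ 2) / a) * (1 - b ^ 2 / t ^ 2)) := by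
        intro t ⟨htb, hta⟩
        have ht0 : 0 < t := hb0.trans htb
        have : min 1 (b ^ 2 / t ^ 2) = b ^ 2 / t ^ 2 := by
          apply min_eq_right
          rw [div_le_one (by positivity)]
          exact pow_le_pow_left₀ hb htb.le 2
        rw [this]
      rw [setLIntegral_congr_fun measurableSet_Ioc hcong]
      have hcont : ContinuousOn (fun t : ℝ => (2 * (a ^ 2 - b ^ 2) / a) * (1 - b ^ 2 / t ^ 2))
          (Set.Icc b a) := by
        apply ContinuousOn.mul continuousOn_const
        apply ContinuousOn.sub continuousOn_const
        apply ContinuousOn.div continuousOn_const (continuousOn_pow 2)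
        intro t ht
        have ht0 : 0 < t := lt_of_lt_of_le hb0 ht.1
        positivity
      have hint : IntegrableOn (fun t : ℝ => (2 * (a ^ 2 - b ^ 2) / a) * (1 - b ^ 2 / t ^ 2))
          (Set.Ioc b a) := (hcont.integrableOn_Icc).mono_set Set.Ioc_subset_Icc_self
      have hnn : 0 ≤ᵐ[volume.restrict (Set.Ioc b a)]
          (fun t : ℝ => (2 * (a ^ 2 - b ^ 2) / a) * (1 - b ^ 2 / t ^ 2)) := by
        filter_upwards [ae_restrict_mem measurableSet_Ioc] with t ht
        obtain ⟨htb, hta⟩ := ht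
        have ht0 : 0 < t := hb0.trans htb
        have : b ^ 2 / t ^ 2 ≤ 1 := by
          rw [div_le_one (by positivity)]
          exact pow_le_pow_left₀ hb htb.le 2
        have h2 : 0 ≤ 1 - b ^ 2 / t ^ 2 := by linarith
        positivity
      rw [← ofReal_integral_eq_lintegral_ofReal hint hnn]
      congr 1
      rw [← intervalIntegral.integral_of_le hba]
      have hderiv : ∀ t ∈ Set.uIcc b a, HasDerivAt
          (fun s : ℝ => (2 * (a ^ 2 - b ^ 2) / a) * (s + b ^ 2 / s))
          ((2 * (a ^ 2 - b ^ 2) / a) * (1 - b ^ 2 / t ^ 2)) t := by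
        intro t ht
        rw [Set.uIcc_of_le hba] at ht
        have ht0 : 0 < t := lt_of_lt_of_le hb0 ht.1
        have h1 : HasDerivAt (fun s : ℝ => s + b ^ 2 / s) (1 - b ^ 2 / t ^ 2) t := by
          have hinv : HasDerivAt (fun s : ℝ => s⁻¹) (-(t ^ 2)⁻¹) t := hasDerivAt_inv ht0.ne'
          have h2 := (hasDerivAt_id t).add (hinv.const_mul (b ^ 2))
          convert h2 using 1
          · rfl
          · rfl
          · funext s; simp [div_eq_mul_inv]
          · rw [div_eq_mul_inv]; ring
          try ring
        exact h1.const_mul _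
      have hii : IntervalIntegrable
          (fun t : ℝ => (2 * (a ^ 2 - b ^ 2) / a) * (1 - b ^ 2 / t ^ 2)) volume b a := by
        apply ContinuousOn.intervalIntegrable
        rwa [Set.uIcc_of_le hba]
      rw [intervalIntegral.integral_eq_sub_of_hasDerivAt hderiv hii]
      field_simp
      try ring
  have piece2 : ∫⁻ t in Set.Ioi a,
      ENNReal.ofReal (2 * t * (min 1 (a ^ 2 / t ^ 2) - min 1 (b ^ 2 / t ^ 2)) ^ 2)
      = ENNReal.ofReal ((a ^ 2 - b ^ 2) ^ 2 / a ^ 2) := by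
    have hcong : ∀ t ∈ Set.Ioi a,
        ENNReal.ofReal (2 * t * (min 1 (a ^ 2 / t ^ 2) - min 1 (b ^ 2 / t ^ 2)) ^ 2)
        = ENNReal.ofReal ((2 * (a ^ 2 - b ^ 2) ^ 2) * t ^ (-3 : ℝ)) := by
      intro t ht
      have hta : a < t := ht
      have ht0 : 0 < t := ha.trans hta
      have h1 : min 1 (a ^ 2 / t ^ 2) = a ^ 2 / t ^ 2 := by
        apply min_eq_right
        rw [div_le_one (by positivity)]
        nlinarith
      have h2 : min 1 (b ^ 2 / t ^ 2) = b ^ 2 / t ^ 2 := by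
        apply min_eq_right
        rw [div_le_one (by positivity)]
        nlinarith
      rw [h1, h2]
      congr 1
      have h3 : t ^ (-3 : ℝ) = (t ^ 3)⁻¹ := by
        rw [show (-3 : ℝ) = -(3:ℕ) by norm_num, Real.rpow_neg ht0.le, Real.rpow_natCast]
      rw [h3]
      field_simp
      try ring
    rw [setLIntegral_congr_fun measurableSet_Ioi hcong]
    have hint : IntegrableOn (fun t : ℝ => (2 * (a ^ 2 - b ^ 2) ^ 2) * t ^ (-3 : ℝ))
        (Set.Ioi a) := (integrableOn_Ioi_rpow_of_lt (by norm_num) ha).const_mul _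
    have hnn : 0 ≤ᵐ[volume.restrict (Set.Ioi a)]
        (fun t : ℝ => (2 * (a ^ 2 - b ^ 2) ^ 2) * t ^ (-3 : ℝ)) := by
      filter_upwards [ae_restrict_mem measurableSet_Ioi] with t ht
      have ht0 : 0 < t := ha.trans ht
      positivity
    rw [← ofReal_integral_eq_lintegral_ofReal hint hnn]
    congr 1
    rw [MeasureTheory.integral_const_mul, integral_Ioi_rpow_of_lt (by norm_num) ha]
    have h4 : a ^ (-3 + 1 : ℝ) = (a ^ 2)⁻¹ := by
      rw [show (-3 + 1 : ℝ) = -(2:ℕ) by norm_num, Real.rpow_neg ha.le, Real.rpow_natCast]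
    rw [h4]
    field_simp
    try ring
  rw [piece2]
  refine (add_le_add_left piece1 _).trans ?_
  rw [← ENNReal.ofReal_add (by positivity) (by positivity)]
  apply ENNReal.ofReal_le_ofReal
  rw [div_mul_div_comm]
  rw [div_add_div _ _ (by positivity : (a*a : ℝ) ≠ 0) (by positivity : (a^2 : ℝ) ≠ 0)]
  rw [div_le_iff₀ (by positivity)]
  nlinarith [sq_nonneg ((a - b) ^ 2), sq_nonneg (a - b), sq_nonneg (a + b), ha.le, hb]

lemma key0' {a b : ℝ} (hb : 0 ≤ b) (hba : b ≤ a) :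
    ∫⁻ t in Set.Ioi (0:ℝ),
      ENNReal.ofReal (2 * t * (min 1 (a ^ 2 / t ^ 2) - min 1 (b ^ 2 / t ^ 2)) ^ 2)
      ≤ ENNReal.ofReal (4 * (a - b) ^ 2) := by
  rcases eq_or_lt_of_le (hb.trans hba) with ha | ha
  · have hb' : b = 0 := le_antisymm (hba.trans ha.symm.le) hb
    rw [hb', ← ha]
    simp
  · exact key0 hb hba ha

lemma keyMain (a b : ℝ) :
    ∫⁻ t in Set.Ioi (0:ℝ),
      ENNReal.ofReal (2 * t * (min 1 (a ^ 2 / t ^ 2) - min 1 (b ^ 2 / t ^ 2)) ^ 2)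
      ≤ ENNReal.ofReal (4 * (a - b) ^ 2) := by
  have hsym : ∀ u v : ℝ, 0 ≤ u → 0 ≤ v →
      ∫⁻ t in Set.Ioi (0:ℝ),
        ENNReal.ofReal (2 * t * (min 1 (u ^ 2 / t ^ 2) - min 1 (v ^ 2 / t ^ 2)) ^ 2)
        ≤ ENNReal.ofReal (4 * (u - v) ^ 2) := by
    intro u v hu hv
    rcases le_total v u with h | h
    · exact key0' hv h
    · calc ∫⁻ t in Set.Ioi (0:ℝ),
          ENNReal.ofReal (2 * t * (min 1 (u ^ 2 / t ^ 2) - min 1 (v ^ 2 / t ^ 2)) ^ 2)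
          = ∫⁻ t in Set.Ioi (0:ℝ),
            ENNReal.ofReal (2 * t * (min 1 (v ^ 2 / t ^ 2) - min 1 (u ^ 2 / t ^ 2)) ^ 2) := by
            apply lintegral_congr
            intro t
            congr 1
            ring
        _ ≤ ENNReal.ofReal (4 * (v - u) ^ 2) := key0' hu h
        _ = ENNReal.ofReal (4 * (u - v) ^ 2) := by ring_nf
  calc ∫⁻ t in Set.Ioi (0:ℝ),
      ENNReal.ofReal (2 * t * (min 1 (a ^ 2 / t ^ 2) - min 1 (b ^ 2 / t ^ 2)) ^ 2)
      = ∫⁻ t in Set.Ioi (0:ℝ),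
        ENNReal.ofReal (2 * t * (min 1 (|a| ^ 2 / t ^ 2) - min 1 (|b| ^ 2 / t ^ 2)) ^ 2) := by
        apply lintegral_congr
        intro t
        rw [sq_abs, sq_abs]
    _ ≤ ENNReal.ofReal (4 * (|a| - |b|) ^ 2) := hsym _ _ (abs_nonneg a) (abs_nonneg b)
    _ ≤ ENNReal.ofReal (4 * (a - b) ^ 2) := by
        apply ENNReal.ofReal_le_ofReal
        have h1 := abs_sub_abs_le_abs_sub a b
        have h2 := abs_sub_abs_le_abs_sub b a
        rw [abs_sub_comm] at h2
        nlinarith [sq_abs (a - b)]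

end Aux

/-- Capacitary inequality: `∫₀^∞ 2t · cap(A_t, B) dt ≤ 4 E(f)` for `f` vanishing on `B`,
where `A_t = {x : |f(x)| > t}`. -/
theorem capacitary_inequality {S : Type*} [Countable S]
    (μ : S → ℝ) (p : S → S → ℝ)
    (hμ : ∀ x, 0 ≤ μ x) (hμ1 : ∑' x, μ x = 1)
    (hp : ∀ x y, 0 ≤ p x y)
    (hdb : ∀ x y, μ x * p x y = μ y * p y x)
    (B : Set S) (hB : B.Nonempty)
    (f : S → ℝ) (hf2 : Summable (fun x => μ x * f x ^ 2))
    (hfB : ∀ x ∈ B, f x = 0) :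
    ∫⁻ t in Set.Ioi (0:ℝ), ENNReal.ofReal (2 * t) * capacity μ p {x | t < |f x|} B
      ≤ 4 * dirichletForm μ p f := by
  have hgm : ∀ c : ℝ, Measurable (fun t : ℝ => min 1 (c / t ^ 2)) :=
    fun c => measurable_const.min (measurable_const.div (measurable_id.pow_const 2))
  have hcap : ∀ t ∈ Set.Ioi (0:ℝ),
      capacity μ p {x | t < |f x|} B
        ≤ dirichletForm μ p (fun x => min 1 ((f x) ^ 2 / t ^ 2)) := by
    intro t ht
    have ht0 : (0:ℝ) < t := ht
    refine iInf_le_of_le ⟨fun x => min 1 ((f x) ^ 2 / t ^ 2), ?_, ?_, ?_⟩ le_rfl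
    · intro x hx
      have hx' : t < |f x| := hx
      apply min_eq_left
      rw [le_div_iff₀ (by positivity), one_mul]
      nlinarith [sq_abs (f x)]
    · intro x hx
      simp only []
      rw [hfB x hx]
      norm_num
    · intro x
      exact ⟨le_min zero_le_one (by positivity), min_le_left _ _⟩
  have hFm : ∀ q : S × S, Measurable (fun t : ℝ =>
      ENNReal.ofReal (2 * t) * ENNReal.ofReal (μ q.1 * p q.1 q.2 *
        (min 1 ((f q.1) ^ 2 / t ^ 2) - min 1 ((f q.2) ^ 2 / t ^ 2)) ^ 2)) := by
    intro q
    apply Measurable.fun_mul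
    · exact ENNReal.measurable_ofReal.comp (measurable_const.mul measurable_id)
    · apply ENNReal.measurable_ofReal.comp
      apply Measurable.const_mul
      exact ((hgm _).sub (hgm _)).pow_const 2
  have hpt : ∀ t : ℝ, ENNReal.ofReal (2 * t) *
      dirichletForm μ p (fun x => min 1 ((f x) ^ 2 / t ^ 2))
      = (1/2 : ℝ≥0∞) * ∑' q : S × S, (ENNReal.ofReal (2 * t) *
        ENNReal.ofReal (μ q.1 * p q.1 q.2 *
          (min 1 ((f q.1) ^ 2 / t ^ 2) - min 1 ((f q.2) ^ 2 / t ^ 2)) ^ 2)) := by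
    intro t
    simp only [dirichletForm]
    rw [ENNReal.tsum_mul_left, mul_left_comm]
  have hqb : ∀ q : S × S, ∫⁻ t in Set.Ioi (0:ℝ),
      ENNReal.ofReal (2 * t) * ENNReal.ofReal (μ q.1 * p q.1 q.2 *
        (min 1 ((f q.1) ^ 2 / t ^ 2) - min 1 ((f q.2) ^ 2 / t ^ 2)) ^ 2)
      ≤ ENNReal.ofReal (μ q.1 * p q.1 q.2) * ENNReal.ofReal (4 * (f q.1 - f q.2) ^ 2) := by
    intro q
    have hμp : 0 ≤ μ q.1 * p q.1 q.2 := mul_nonneg (hμ q.1) (hp q.1 q.2)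
    have hcongr : ∀ᵐ t ∂(volume : Measure ℝ), t ∈ Set.Ioi (0:ℝ) →
        ENNReal.ofReal (2 * t) * ENNReal.ofReal (μ q.1 * p q.1 q.2 *
          (min 1 ((f q.1) ^ 2 / t ^ 2) - min 1 ((f q.2) ^ 2 / t ^ 2)) ^ 2)
        = ENNReal.ofReal (μ q.1 * p q.1 q.2) * ENNReal.ofReal (2 * t *
          (min 1 ((f q.1) ^ 2 / t ^ 2) - min 1 ((f q.2) ^ 2 / t ^ 2)) ^ 2) := by
      refine Filter.Eventually.of_forall (fun t ht => ?_)
      have ht0 : (0:ℝ) < t := ht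
      rw [← ENNReal.ofReal_mul (by linarith : (0:ℝ) ≤ 2 * t),
        ← ENNReal.ofReal_mul hμp]
      congr 1
      ring
    rw [setLIntegral_congr_fun_ae measurableSet_Ioi hcongr,
      lintegral_const_mul' _ _ ENNReal.ofReal_ne_top]
    exact mul_le_mul_right (keyMain (f q.1) (f q.2)) _
  calc ∫⁻ t in Set.Ioi (0:ℝ), ENNReal.ofReal (2 * t) * capacity μ p {x | t < |f x|} B
      ≤ ∫⁻ t in Set.Ioi (0:ℝ), ENNReal.ofReal (2 * t) *
          dirichletForm μ p (fun x => min 1 ((f x) ^ 2 / t ^ 2)) := by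
        apply lintegral_mono_ae
        rw [ae_restrict_iff' measurableSet_Ioi]
        exact Filter.Eventually.of_forall fun t ht => mul_le_mul_right (hcap t ht) _
    _ = (1/2 : ℝ≥0∞) * ∑' q : S × S, ∫⁻ t in Set.Ioi (0:ℝ),
          ENNReal.ofReal (2 * t) * ENNReal.ofReal (μ q.1 * p q.1 q.2 *
            (min 1 ((f q.1) ^ 2 / t ^ 2) - min 1 ((f q.2) ^ 2 / t ^ 2)) ^ 2) := by
        rw [lintegral_congr hpt, lintegral_const_mul' _ _ (by norm_num),
          lintegral_tsum (fun q => (hFm q).aemeasurable)]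
    _ ≤ (1/2 : ℝ≥0∞) * ∑' q : S × S,
          ENNReal.ofReal (μ q.1 * p q.1 q.2) * ENNReal.ofReal (4 * (f q.1 - f q.2) ^ 2) := by
        exact mul_le_mul_right (ENNReal.tsum_le_tsum hqb) _
    _ = 4 * dirichletForm μ p f := by
        have h4 : ∀ q : S × S, ENNReal.ofReal (μ q.1 * p q.1 q.2) *
            ENNReal.ofReal (4 * (f q.1 - f q.2) ^ 2)
            = 4 * ENNReal.ofReal (μ q.1 * p q.1 q.2 * (f q.1 - f q.2) ^ 2) := by
          intro q
          rw [← ENNReal.ofReal_mul (mul_nonneg (hμ q.1) (hp q.1 q.2)),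
            show μ q.1 * p q.1 q.2 * (4 * (f q.1 - f q.2) ^ 2)
              = 4 * (μ q.1 * p q.1 q.2 * (f q.1 - f q.2) ^ 2) by ring,
            ENNReal.ofReal_mul (by norm_num : (0:ℝ) ≤ 4)]
          norm_num
        rw [tsum_congr h4, ENNReal.tsum_mul_left, dirichletForm]
        ring
end

section
/- For the indicator function of a set A, the K-Orlicz norm satisfies ‖1_A‖_{Φ,μ,K} = μ[A] · Ψ⁻¹(K/μ[A]), where Ψ⁻¹(t) = inf{s ∈ [0,∞] : Ψ(s) > t}. -/
open scoped ENNReal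
open Filter

/-- A Young function: convex on `[0,∞)`, vanishing at `0` (including in the limit),
and tending to `∞` at `∞`. Values are taken in `[0,∞]`. -/
def IsYoung (Φ : ℝ → ℝ≥0∞) : Prop :=
  (∀ a ∈ Set.Ici (0:ℝ), ∀ b ∈ Set.Ici (0:ℝ), ∀ t ∈ Set.Icc (0:ℝ) 1,
      Φ (t * a + (1 - t) * b) ≤ ENNReal.ofReal t * Φ a + ENNReal.ofReal (1 - t) * Φ b)
  ∧ Φ 0 = 0
  ∧ Filter.Tendsto Φ (nhdsWithin 0 (Set.Ioi 0)) (nhds 0)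
  ∧ Filter.Tendsto Φ Filter.atTop Filter.atTop

/-- The Legendre–Fenchel dual `Ψ(r) = sup_{s ≥ 0} (s r − Φ(s))`. -/
noncomputable def legendreDual (Φ : ℝ → ℝ≥0∞) (r : ℝ) : ℝ≥0∞ :=
  ⨆ s : Set.Ici (0:ℝ), ENNReal.ofReal (s.1 * r) - Φ s.1

/-- The pseudo-inverse `Ψ⁻¹(t) = inf{s ∈ [0,∞] : Ψ(s) > t}`. -/
noncomputable def pseudoInv (Ψ : ℝ → ℝ≥0∞) (t : ℝ≥0∞) : ℝ≥0∞ :=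
  sInf ((fun s : ℝ => ENNReal.ofReal s) '' {s : ℝ | 0 ≤ s ∧ t < Ψ s})

/-- The `K`-Orlicz norm `‖f‖_{Φ,μ,K} = sup{ E_μ[|f| g] : g ≥ 0, E_μ[Ψ(g)] ≤ K }`,
written in terms of the dual function `Ψ`. -/
noncomputable def orliczNorm {S : Type*} (μ : S → ℝ) (Ψ : ℝ → ℝ≥0∞) (K : ℝ≥0∞)
    (f : S → ℝ) : ℝ≥0∞ :=
  ⨆ g : {g : S → ℝ // (∀ x, 0 ≤ g x) ∧ ∑' x, ENNReal.ofReal (μ x) * Ψ (g x) ≤ K},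
    ∑' x, ENNReal.ofReal (μ x * |f x| * g.1 x)

/-- The measure of a set `A`, `μ[A] = ∑_{x ∈ A} μ(x)`. -/
noncomputable def measOf {S : Type*} (μ : S → ℝ) (A : Set S) : ℝ≥0∞ :=
  ∑' x : A, ENNReal.ofReal (μ x)


lemma young_ineq (Φ : ℝ → ℝ≥0∞) {r x : ℝ} (hr : 0 ≤ r) :
    ENNReal.ofReal (r * x) ≤ legendreDual Φ x + Φ r := by
  rw [← tsub_le_iff_right]
  exact le_iSup_of_le ⟨r, hr⟩ le_rfl

lemma legendreDual_zero (Φ : ℝ → ℝ≥0∞) : legendreDual Φ 0 = 0 := by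
  refine le_antisymm (iSup_le fun s => ?_) (zero_le)
  simp [zero_tsub]

/-- The `K`-Orlicz norm of an indicator function:
`‖1_A‖_{Φ,μ,K} = μ[A] · Ψ⁻¹(K/μ[A])`. -/
theorem orliczNorm_indicator {S : Type*} [Countable S]
    (μ : S → ℝ) (hμ : ∀ x, 0 ≤ μ x) (hμ1 : ∑' x, μ x = 1)
    (Φ Ψ : ℝ → ℝ≥0∞) (hΦ : IsYoung Φ) (hΨ : Ψ = legendreDual Φ)
    (K : ℝ≥0∞) (hK : 0 < K) (A : Set S) :
    orliczNorm μ Ψ K (A.indicator fun _ => (1:ℝ))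
      = measOf μ A * pseudoInv Ψ (K / measOf μ A) := by
  subst hΨ
  set Ψ := legendreDual Φ with hΨdef
  set m := measOf μ A with hm
  set c := pseudoInv Ψ (K / m) with hc
  -- value of a general g
  have hval : ∀ g : S → ℝ,
      ∑' x, ENNReal.ofReal (μ x * |A.indicator (fun _ => (1:ℝ)) x| * g x)
        = ∑' x : A, ENNReal.ofReal (μ x * g x) := by
    intro g
    rw [← tsum_subtype_eq_of_support_subset (s := A)]
    · refine tsum_congr fun x => ?_
      rw [Set.indicator_of_mem x.2]
      norm_num
    · intro x hx
      by_contra hxA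
      apply hx
      simp [Set.indicator_of_notMem hxA]
  by_cases hm0 : m = 0
  · rw [hm0, zero_mul]
    refine le_antisymm (iSup_le ?_) (zero_le)
    rintro ⟨g, hg0, hgK⟩
    rw [hval g]
    have hm0' := hm0
    rw [hm, measOf] at hm0'
    have hμA : ∀ x : A, ENNReal.ofReal (μ (x:S)) = 0 := ENNReal.tsum_eq_zero.mp hm0'
    refine le_of_eq (ENNReal.tsum_eq_zero.mpr fun x => ?_)
    have h0 : μ (x : S) = 0 := le_antisymm (by simpa using hμA x) (hμ x)
    simp [h0]
  · -- m ≠ 0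
    have hsum : Summable μ := by
      by_contra h
      rw [tsum_eq_zero_of_not_summable h] at hμ1
      norm_num at hμ1
    have hmle : m ≤ 1 := by
      calc m = ∑' x, A.indicator (fun x => ENNReal.ofReal (μ x)) x := by
              rw [hm, measOf]
              exact tsum_subtype A fun x => ENNReal.ofReal (μ x)
        _ ≤ ∑' x, ENNReal.ofReal (μ x) :=
              ENNReal.tsum_le_tsum fun x => Set.indicator_le_self _ _ x
        _ = ENNReal.ofReal (∑' x, μ x) := (ENNReal.ofReal_tsum_of_nonneg hμ hsum).symm
        _ = 1 := by rw [hμ1]; simp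
    have hmtop : m ≠ ∞ := (lt_of_le_of_lt hmle (by norm_num)).ne
    -- subtype tsum is at most full tsum
    have hsub_le : ∀ F : S → ℝ≥0∞, (∑' x : A, F x) ≤ ∑' x, F x := by
      intro F
      rw [tsum_subtype A F]
      exact ENNReal.tsum_le_tsum fun x => Set.indicator_le_self _ _ x
    -- upper bound
    have hub : orliczNorm μ Ψ K (A.indicator fun _ => (1:ℝ)) ≤ m * c := by
      refine iSup_le ?_
      rintro ⟨g, hg0, hgK⟩
      rw [hval g]
      set V := ∑' x : A, ENNReal.ofReal (μ x * g x) with hV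
      have key : ∀ r : ℝ, 0 ≤ r → ENNReal.ofReal r * V ≤ K + m * Φ r := by
        intro r hr
        calc ENNReal.ofReal r * V
            = ∑' x : A, ENNReal.ofReal (μ (x:S)) * ENNReal.ofReal (r * g (x:S)) := by
              rw [hV, ← ENNReal.tsum_mul_left]
              refine tsum_congr fun x => ?_
              rw [← ENNReal.ofReal_mul hr, ← ENNReal.ofReal_mul (hμ _)]
              ring_nf
          _ ≤ ∑' x : A, ENNReal.ofReal (μ (x:S)) * (Ψ (g (x:S)) + Φ r) :=
              ENNReal.tsum_le_tsum fun x => mul_le_mul_right (young_ineq Φ hr) _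
          _ = (∑' x : A, ENNReal.ofReal (μ (x:S)) * Ψ (g (x:S))) + m * Φ r := by
              rw [hm, measOf]
              simp only [mul_add]
              rw [ENNReal.tsum_add, ENNReal.tsum_mul_right]
          _ ≤ K + m * Φ r := by
              gcongr
              exact le_trans (hsub_le _) hgK
      by_contra hcon
      push_neg at hcon
      have hcne : c ≠ ∞ := by
        intro hctop
        rw [hctop, ENNReal.mul_top hm0] at hcon
        exact (not_top_lt) hcon
      have h1 : c < V / m := by
        rw [ENNReal.lt_div_iff_mul_lt (Or.inl hm0) (Or.inl hmtop), mul_comm]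
        exact hcon
      obtain ⟨y, hy, hylt⟩ := sInf_lt_iff.mp (lt_of_le_of_lt (le_refl c) h1)
      obtain ⟨s₀, ⟨hs₀, hΨs₀⟩, rfl⟩ := hy
      have h2 : m * ENNReal.ofReal s₀ < V := by
        have := ENNReal.mul_lt_of_lt_div hylt
        rwa [mul_comm] at this
      rw [hΨdef, legendreDual, lt_iSup_iff] at hΨs₀
      obtain ⟨⟨r, hr⟩, hlt⟩ := hΨs₀
      have hΦr : Φ r ≠ ∞ := by
        intro htop
        rw [htop, ENNReal.sub_top] at hlt
        exact absurd hlt (not_lt.mpr (zero_le))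
      have h3 : K / m + Φ r < ENNReal.ofReal (r * s₀) :=
        (ENNReal.cancel_of_ne hΦr).lt_tsub_iff_right.mp hlt
      have hrs₀ : 0 < r * s₀ := by
        have : (0:ℝ≥0∞) < ENNReal.ofReal (r * s₀) := lt_of_le_of_lt (zero_le) h3
        exact ENNReal.ofReal_pos.mp this
      have hrpos : 0 < r := by
        by_contra hrc
        push_neg at hrc
        have hs : 0 ≤ s₀ := hs₀
        nlinarith
      have h4 : K + m * Φ r < m * ENNReal.ofReal (r * s₀) := by
        have := (ENNReal.mul_lt_mul_iff_right hm0 hmtop).mpr h3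
        rwa [mul_add, ENNReal.mul_div_cancel hm0 hmtop] at this
      have h5 : m * ENNReal.ofReal (r * s₀) = ENNReal.ofReal r * (m * ENNReal.ofReal s₀) := by
        rw [ENNReal.ofReal_mul hrpos.le]
        ring
      have h6 : ENNReal.ofReal r * (m * ENNReal.ofReal s₀) < ENNReal.ofReal r * V :=
        (ENNReal.mul_lt_mul_iff_right (by simpa using hrpos) ENNReal.ofReal_ne_top).mpr h2
      have := lt_of_lt_of_le (lt_trans (h5 ▸ h4) h6) (key r hrpos.le)
      exact lt_irrefl _ this
    -- lower bound
    have hstep : ∀ t : ℝ, 0 ≤ t → Ψ t ≤ K / m →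
        m * ENNReal.ofReal t ≤ orliczNorm μ Ψ K (A.indicator fun _ => (1:ℝ)) := by
      intro t ht hΨt
      have hg0 : ∀ x, 0 ≤ A.indicator (fun _ => t) x :=
        fun x => Set.indicator_nonneg (fun _ _ => ht) x
      have hΨ0 : Ψ 0 = 0 := legendreDual_zero Φ
      have hgK : ∑' x, ENNReal.ofReal (μ x) * Ψ (A.indicator (fun _ => t) x) ≤ K := by
        have heq : ∀ x, ENNReal.ofReal (μ x) * Ψ (A.indicator (fun _ => t) x)
            = A.indicator (fun y => ENNReal.ofReal (μ y) * Ψ t) x := by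
          intro x
          by_cases hx : x ∈ A
          · rw [Set.indicator_of_mem hx, Set.indicator_of_mem hx]
          · rw [Set.indicator_of_notMem hx, Set.indicator_of_notMem hx, hΨ0, mul_zero]
        calc ∑' x, ENNReal.ofReal (μ x) * Ψ (A.indicator (fun _ => t) x)
            = ∑' x : A, ENNReal.ofReal (μ (x:S)) * Ψ t := by
              rw [tsum_congr heq, ← tsum_subtype]
          _ = m * Ψ t := by rw [ENNReal.tsum_mul_right, hm, measOf]
          _ ≤ m * (K / m) := mul_le_mul_right hΨt m
          _ = K := ENNReal.mul_div_cancel hm0 hmtop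
      refine le_trans ?_ (le_iSup _ ⟨A.indicator (fun _ => t), hg0, hgK⟩)
      rw [hval]
      refine le_of_eq ?_
      calc m * ENNReal.ofReal t = ∑' x : A, ENNReal.ofReal (μ (x:S)) * ENNReal.ofReal t := by
            rw [ENNReal.tsum_mul_right, hm, measOf]
        _ = ∑' x : A, ENNReal.ofReal (μ (x:S) * A.indicator (fun _ => t) (x:S)) := by
            refine tsum_congr fun x => ?_
            rw [Set.indicator_of_mem x.2, ENNReal.ofReal_mul (hμ _)]
    have hlb : m * c ≤ orliczNorm μ Ψ K (A.indicator fun _ => (1:ℝ)) := by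
      by_contra hcon
      push_neg at hcon
      set N := orliczNorm μ Ψ K (A.indicator fun _ => (1:ℝ)) with hN
      have hNtop : N ≠ ∞ := (lt_of_lt_of_le hcon le_top).ne
      have h1 : N / m < c := by
        rw [ENNReal.div_lt_iff (Or.inl hm0) (Or.inl hmtop), mul_comm]
        exact hcon
      obtain ⟨b, hb1, hb2⟩ := exists_between h1
      have hbtop : b ≠ ∞ := (lt_of_lt_of_le hb2 le_top).ne
      set t := b.toReal with htdef
      have ht : 0 ≤ t := ENNReal.toReal_nonneg
      have hbt : ENNReal.ofReal t = b := ENNReal.ofReal_toReal hbtop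
      have hΨt : Ψ t ≤ K / m := by
        by_contra hΨt
        push_neg at hΨt
        have : c ≤ b := by
          rw [← hbt]
          exact sInf_le ⟨t, ⟨ht, hΨt⟩, rfl⟩
        exact absurd hb2 (not_lt.mpr this)
      have := hstep t ht hΨt
      rw [hbt] at this
      have hlt : N < m * b := by
        have := (ENNReal.div_lt_iff (Or.inl hm0) (Or.inl hmtop)).mp hb1
        rwa [mul_comm] at this
      exact absurd (lt_of_lt_of_le hlt this) (lt_irrefl N)
    exact le_antisymm hub hlb
end

section
/- For reversible transition probabilities, if the measure-capacity inequality ν[A] Ψ⁻¹(K/ν[A]) ≤ C · cap(A,B) holds for all A ⊂ S\B, then for every f ∈ ℓ²(μ) vanishing on B one has ‖f²‖_{Φ,ν,K} ≤ 4C · E(f). -/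
open scoped ENNReal
open Filter

open MeasureTheory Set

noncomputable section


private lemma log_lb {w : ℝ} (hw : 0 ≤ w) : w - w^2/2 ≤ Real.log (1+w) := by
  have hd : ∀ x : ℝ, 0 ≤ x → HasDerivAt (fun w : ℝ => Real.log (1+w) - (w - w^2/2))
      ((1+x)⁻¹ - (1 - x)) x := by
    intro x hx
    have h1 : (1:ℝ) + x ≠ 0 := by positivity
    have hlog : HasDerivAt (fun w : ℝ => Real.log (1+w)) ((1+x)⁻¹) x := by
      have := (Real.hasDerivAt_log h1).comp x ((hasDerivAt_id x).const_add 1)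
      simpa [Function.comp_def] using this
    have hpoly : HasDerivAt (fun w : ℝ => w - w^2/2) (1 - x) x := by
      have h2 : HasDerivAt (fun w : ℝ => w^2/2) x x := by
        have := (hasDerivAt_pow 2 x).div_const 2
        simpa using this
      exact (hasDerivAt_id' x).sub h2
    exact hlog.sub hpoly
  have hmono : MonotoneOn (fun w : ℝ => Real.log (1+w) - (w - w^2/2)) (Set.Ici 0) := by
    apply monotoneOn_of_deriv_nonneg (convex_Ici 0)
    · exact fun x hx => ((hd x hx).continuousAt).continuousWithinAt
    · intro x hx
      rw [interior_Ici] at hx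
      exact ((hd x (le_of_lt hx)).differentiableAt).differentiableWithinAt
    · intro x hx
      rw [interior_Ici] at hx
      rw [(hd x (le_of_lt hx)).deriv]
      have h1 : (0:ℝ) < 1 + x := by linarith [le_of_lt (mem_Ioi.mp hx)]
      have : (1+x)⁻¹ - (1 - x) = x^2/(1+x) := by field_simp; ring
      rw [this]; positivity
  have h0 : (fun w : ℝ => Real.log (1+w) - (w - w^2/2)) 0 ≤ _ :=
    hmono (self_mem_Ici) (mem_Ici.mpr hw) hw
  simp at h0
  linarith


private lemma tail_integrable {α c : ℝ} (hα : 0 < α) :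
    IntegrableOn (fun t : ℝ => c^2/t^2) (Set.Ioi α) volume := by
  have hderiv : ∀ x ∈ Set.Ici α, HasDerivAt (fun t : ℝ => -(c^2) * t⁻¹) (c^2/x^2) x := by
    intro x hx
    have hx0 : x ≠ 0 := (lt_of_lt_of_le hα hx).ne'
    have := (hasDerivAt_inv hx0).const_mul (-(c^2))
    rw [show c^2/x^2 = -(c^2) * -(x^2)⁻¹ by ring]
    exact this
  have htend : Filter.Tendsto (fun t : ℝ => -(c^2) * t⁻¹) Filter.atTop (nhds 0) := by
    have := tendsto_inv_atTop_zero.const_mul (-(c^2))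
    simpa using this
  exact integrableOn_Ioi_deriv_of_nonneg' hderiv (fun x hx => by positivity) htend

private lemma tail_integral {α c : ℝ} (hα : 0 < α) :
    ∫ t in Set.Ioi α, c^2/t^2 = c^2/α := by
  have hderiv : ∀ x ∈ Set.Ici α, HasDerivAt (fun t : ℝ => -(c^2) * t⁻¹) (c^2/x^2) x := by
    intro x hx
    have hx0 : x ≠ 0 := (lt_of_lt_of_le hα hx).ne'
    have := (hasDerivAt_inv hx0).const_mul (-(c^2))
    rw [show c^2/x^2 = -(c^2) * -(x^2)⁻¹ by ring]
    exact this
  have htend : Filter.Tendsto (fun t : ℝ => -(c^2) * t⁻¹) Filter.atTop (nhds 0) := by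
    have := tendsto_inv_atTop_zero.const_mul (-(c^2))
    simpa using this
  rw [integral_Ioi_of_hasDerivAt_of_nonneg' hderiv (fun x hx => by positivity) htend]
  field_simp
  ring

private lemma middle_integral {b a : ℝ} (hb : 0 < b) (hba : b ≤ a) :
    ∫ t in Set.Ioc (b^2) (a^2), (1 - b^2/t)^2
      = (a^2 - 2*b^2*Real.log (a^2) - b^4 * (a^2)⁻¹)
        - (b^2 - 2*b^2*Real.log (b^2) - b^4 * (b^2)⁻¹) := by
  have hb2 : (0:ℝ) < b^2 := by positivity
  have hba2 : b^2 ≤ a^2 := by nlinarith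
  have key : ∀ t ∈ Set.uIcc (b^2) (a^2),
      HasDerivAt (fun t : ℝ => t - 2*b^2*Real.log t - b^4 * t⁻¹) ((1 - b^2/t)^2) t := by
    intro t ht
    rw [Set.uIcc_of_le hba2] at ht
    have ht0 : (0:ℝ) < t := lt_of_lt_of_le hb2 ht.1
    have h1 : HasDerivAt (fun t : ℝ => t - 2*b^2*Real.log t - b^4 * t⁻¹)
        (1 - 2*b^2 * t⁻¹ - b^4 * (-(t^2)⁻¹)) t := by
      exact ((hasDerivAt_id t).sub ((Real.hasDerivAt_log ht0.ne').const_mul (2*b^2))).sub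
        ((hasDerivAt_inv ht0.ne').const_mul (b^4))
    convert h1 using 1
    field_simp
    ring
  have hcont : ContinuousOn (fun t : ℝ => (1 - b^2/t)^2) (Set.uIcc (b^2) (a^2)) := by
    rw [Set.uIcc_of_le hba2]
    refine (ContinuousOn.sub continuousOn_const ?_).pow 2
    exact continuousOn_const.div continuousOn_id (fun t ht => (lt_of_lt_of_le hb2 ht.1).ne')
  have hint : IntervalIntegrable (fun t : ℝ => (1 - b^2/t)^2) volume (b^2) (a^2) :=
    hcont.intervalIntegrable
  rw [← intervalIntegral.integral_of_le hba2,
    intervalIntegral.integral_eq_sub_of_hasDerivAt key hint]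

private lemma core_lintegral {a b : ℝ} (hb : 0 ≤ b) (hba : b ≤ a) :
    (∫⁻ t : ℝ, (Set.Ioi (0:ℝ)).indicator
        (fun t => ENNReal.ofReal ((min 1 (a^2/t) - min 1 (b^2/t))^2)) t)
      ≤ ENNReal.ofReal (4*(a-b)^2) := by
  rw [lintegral_indicator measurableSet_Ioi]
  rcases eq_or_lt_of_le (hb.trans hba) with ha0 | ha0
  · -- a = 0 (hence b = 0)
    have hb0 : b = 0 := le_antisymm (hba.trans ha0.symm.le) hb
    subst hb0
    rw [← ha0]
    simp
  · -- 0 < a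
    have ha2 : (0:ℝ) < a^2 := by positivity
    rcases eq_or_lt_of_le hb with hb0 | hb0
    · -- b = 0
      subst hb0
      have hsplit : Set.Ioi (0:ℝ) = Set.Ioc 0 (a^2) ∪ Set.Ioi (a^2) :=
        (Set.Ioc_union_Ioi_eq_Ioi ha2.le).symm
      rw [hsplit, lintegral_union measurableSet_Ioi (Set.Ioc_disjoint_Ioi le_rfl)]
      have e1 : ∀ t ∈ Set.Ioc (0:ℝ) (a^2),
          ENNReal.ofReal ((min 1 (a^2/t) - min 1 ((0:ℝ)^2/t))^2) = (1 : ℝ≥0∞) := by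
        intro t ht
        have h1t : (1:ℝ) ≤ a^2/t := (le_div_iff₀ ht.1).mpr (by simpa using ht.2)
        rw [min_eq_left h1t]
        norm_num
      have h1 : ∫⁻ t in Set.Ioc (0:ℝ) (a^2),
          ENNReal.ofReal ((min 1 (a^2/t) - min 1 ((0:ℝ)^2/t))^2) = ENNReal.ofReal (a^2) := by
        rw [setLIntegral_congr_fun measurableSet_Ioc e1,
          setLIntegral_const, Real.volume_Ioc, one_mul, sub_zero]
      have e2 : ∀ t ∈ Set.Ioi (a^2),
          ENNReal.ofReal ((min 1 (a^2/t) - min 1 ((0:ℝ)^2/t))^2)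
            = ENNReal.ofReal ((a^2)^2/t^2) := by
        intro t ht
        have ht0 : (0:ℝ) < t := lt_trans ha2 ht
        rw [min_eq_right ((div_le_one ht0).mpr (le_of_lt ht))]
        norm_num
        rw [div_pow]
      have h2 : ∫⁻ t in Set.Ioi (a^2),
          ENNReal.ofReal ((min 1 (a^2/t) - min 1 ((0:ℝ)^2/t))^2) = ENNReal.ofReal (a^2) := by
        rw [setLIntegral_congr_fun measurableSet_Ioi e2,
          ← MeasureTheory.ofReal_integral_eq_lintegral_ofReal (tail_integrable (c := a^2) ha2)
            (Filter.Eventually.of_forall (fun t => by positivity)),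
          tail_integral (c := a^2) ha2]
        congr 1
        field_simp
      rw [h1, h2, ← ENNReal.ofReal_add (by positivity) (by positivity)]
      apply ENNReal.ofReal_le_ofReal
      nlinarith
    · -- 0 < b
      have hb2 : (0:ℝ) < b^2 := by positivity
      have hba2 : b^2 ≤ a^2 := by nlinarith
      have hsplit : Set.Ioi (0:ℝ)
          = (Set.Ioc 0 (b^2) ∪ Set.Ioc (b^2) (a^2)) ∪ Set.Ioi (a^2) := by
        rw [Set.Ioc_union_Ioc_eq_Ioc hb2.le hba2, Set.Ioc_union_Ioi_eq_Ioi ha2.le]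
      have hdisj1 : Disjoint (Set.Ioc (0:ℝ) (b^2) ∪ Set.Ioc (b^2) (a^2)) (Set.Ioi (a^2)) :=
        Disjoint.union_left (Set.Ioc_disjoint_Ioi hba2) (Set.Ioc_disjoint_Ioi le_rfl)
      rw [hsplit, lintegral_union measurableSet_Ioi hdisj1,
        lintegral_union measurableSet_Ioc (Set.Ioc_disjoint_Ioc_of_le le_rfl)]
      have e0 : ∀ t ∈ Set.Ioc (0:ℝ) (b^2),
          ENNReal.ofReal ((min 1 (a^2/t) - min 1 (b^2/t))^2) = 0 := by
        intro t ht
        have hta : (1:ℝ) ≤ a^2/t := (le_div_iff₀ ht.1).mpr (by simpa using ht.2.trans hba2)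
        have htb : (1:ℝ) ≤ b^2/t := (le_div_iff₀ ht.1).mpr (by simpa using ht.2)
        rw [min_eq_left hta, min_eq_left htb]
        norm_num
      have h0 : ∫⁻ t in Set.Ioc (0:ℝ) (b^2),
          ENNReal.ofReal ((min 1 (a^2/t) - min 1 (b^2/t))^2) = 0 := by
        rw [setLIntegral_congr_fun measurableSet_Ioc e0,
          lintegral_zero]
      have e1 : ∀ t ∈ Set.Ioc (b^2) (a^2),
          ENNReal.ofReal ((min 1 (a^2/t) - min 1 (b^2/t))^2)
            = ENNReal.ofReal ((1 - b^2/t)^2) := by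
        intro t ht
        have ht0 : (0:ℝ) < t := lt_trans hb2 ht.1
        have hta : (1:ℝ) ≤ a^2/t := (le_div_iff₀ ht0).mpr (by simpa using ht.2)
        have htb : b^2/t ≤ 1 := (div_le_one ht0).mpr (le_of_lt ht.1)
        rw [min_eq_left hta, min_eq_right htb]
      have hcont : ContinuousOn (fun t : ℝ => (1 - b^2/t)^2) (Set.Icc (b^2) (a^2)) := by
        refine (ContinuousOn.sub continuousOn_const ?_).pow 2
        exact continuousOn_const.div continuousOn_id
          (fun t ht => (lt_of_lt_of_le hb2 ht.1).ne')
      have hIntOn : IntegrableOn (fun t : ℝ => (1 - b^2/t)^2) (Set.Ioc (b^2) (a^2)) volume :=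
        (hcont.integrableOn_Icc).mono_set Set.Ioc_subset_Icc_self
      have h1 : ∫⁻ t in Set.Ioc (b^2) (a^2),
          ENNReal.ofReal ((min 1 (a^2/t) - min 1 (b^2/t))^2)
          = ENNReal.ofReal ((a^2 - 2*b^2*Real.log (a^2) - b^4 * (a^2)⁻¹)
            - (b^2 - 2*b^2*Real.log (b^2) - b^4 * (b^2)⁻¹)) := by
        rw [setLIntegral_congr_fun measurableSet_Ioc e1,
          ← MeasureTheory.ofReal_integral_eq_lintegral_ofReal hIntOn
            (Filter.Eventually.of_forall (fun t => sq_nonneg _)), middle_integral hb0 hba]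
      have e2 : ∀ t ∈ Set.Ioi (a^2),
          ENNReal.ofReal ((min 1 (a^2/t) - min 1 (b^2/t))^2)
            = ENNReal.ofReal ((a^2-b^2)^2/t^2) := by
        intro t ht
        have ht0 : (0:ℝ) < t := lt_trans ha2 ht
        have hta : a^2/t ≤ 1 := (div_le_one ht0).mpr (le_of_lt ht)
        have htb : b^2/t ≤ 1 := (div_le_one ht0).mpr (le_of_lt (lt_of_le_of_lt hba2 ht))
        rw [min_eq_right hta, min_eq_right htb, div_sub_div_same, div_pow]
      have h2 : ∫⁻ t in Set.Ioi (a^2),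
          ENNReal.ofReal ((min 1 (a^2/t) - min 1 (b^2/t))^2)
          = ENNReal.ofReal ((a^2-b^2)^2/a^2) := by
        rw [setLIntegral_congr_fun measurableSet_Ioi e2,
          ← MeasureTheory.ofReal_integral_eq_lintegral_ofReal
            (tail_integrable (c := a^2 - b^2) ha2)
            (Filter.Eventually.of_forall (fun t => by positivity)),
          tail_integral (c := a^2 - b^2) ha2]
      rw [h0, h1, h2, zero_add]
      have hMnn : (0:ℝ) ≤ (a^2 - 2*b^2*Real.log (a^2) - b^4 * (a^2)⁻¹)
          - (b^2 - 2*b^2*Real.log (b^2) - b^4 * (b^2)⁻¹) := by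
        rw [← middle_integral hb0 hba]
        exact setIntegral_nonneg measurableSet_Ioc (fun t ht => sq_nonneg _)
      rw [← ENNReal.ofReal_add hMnn (by positivity : (0:ℝ) ≤ (a^2-b^2)^2/a^2)]
      apply ENNReal.ofReal_le_ofReal
      -- real inequality
      have hw0 : (0:ℝ) ≤ (a-b)/b := div_nonneg (by linarith) hb0.le
      have hL : Real.log (a^2) - Real.log (b^2) = 2 * Real.log (1 + (a-b)/b) := by
        have h1w : (1:ℝ) + (a-b)/b = a / b := by field_simp; ring
        rw [h1w, Real.log_div (by positivity) hb0.ne', Real.log_pow, Real.log_pow]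
        push_cast
        ring
      have hkey := log_lb hw0
      have hident : ((a^2 - 2*b^2*Real.log (a^2) - b^4 * (a^2)⁻¹)
            - (b^2 - 2*b^2*Real.log (b^2) - b^4 * (b^2)⁻¹)) + (a^2-b^2)^2/a^2
          = 2*a^2 - 2*b^2 - 2*b^2*(Real.log (a^2) - Real.log (b^2)) := by
        field_simp
        ring
      rw [hident, hL]
      have h1 : 4*b^2*((a-b)/b - ((a-b)/b)^2/2) ≤ 4*b^2*Real.log (1+(a-b)/b) := by nlinarith
      have h2 : 4*b^2*((a-b)/b - ((a-b)/b)^2/2) = 4*b*(a-b) - 2*(a-b)^2 := by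
        field_simp
        ring
      nlinarith

private lemma core_wlog {x y : ℝ} (h : |y| ≤ |x|) :
    (∫⁻ t : ℝ, (Set.Ioi (0:ℝ)).indicator
        (fun t => ENNReal.ofReal ((min 1 (x^2/t) - min 1 (y^2/t))^2)) t)
      ≤ ENNReal.ofReal (4*(x-y)^2) := by
  have hcore := core_lintegral (abs_nonneg y) h
  rw [sq_abs, sq_abs] at hcore
  refine hcore.trans (ENNReal.ofReal_le_ofReal ?_)
  have h2 := abs_le.mp (abs_abs_sub_abs_le_abs_sub x y)
  have h3 : (|x| - |y|)^2 ≤ |x - y|^2 := sq_le_sq' h2.1 h2.2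
  rw [sq_abs] at h3
  linarith

private lemma pair_lintegral (c x y : ℝ) (hc : 0 ≤ c) :
    (∫⁻ t : ℝ, (Set.Ioi (0:ℝ)).indicator
        (fun t => ENNReal.ofReal (c * (min 1 (x^2/t) - min 1 (y^2/t))^2)) t)
      ≤ 4 * ENNReal.ofReal (c * (x-y)^2) := by
  have hrw : ∀ t : ℝ, (Set.Ioi (0:ℝ)).indicator
      (fun t => ENNReal.ofReal (c * (min 1 (x^2/t) - min 1 (y^2/t))^2)) t
      = ENNReal.ofReal c * (Set.Ioi (0:ℝ)).indicator
        (fun t => ENNReal.ofReal ((min 1 (x^2/t) - min 1 (y^2/t))^2)) t := by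
    intro t
    by_cases ht : t ∈ Set.Ioi (0:ℝ)
    · simp [Set.indicator_of_mem ht, ENNReal.ofReal_mul hc]
    · simp [Set.indicator_of_notMem ht]
  simp_rw [hrw]
  rw [lintegral_const_mul' _ _ ENNReal.ofReal_ne_top]
  have hfinal : ENNReal.ofReal c * ENNReal.ofReal (4*(x-y)^2)
      = 4 * ENNReal.ofReal (c * (x-y)^2) := by
    rw [ENNReal.ofReal_mul hc, ENNReal.ofReal_mul (by norm_num : (0:ℝ) ≤ 4)]
    rw [show ENNReal.ofReal (4:ℝ) = (4:ℝ≥0∞) by norm_num]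
    ring
  rcases le_total (|y|) (|x|) with h | h
  · rw [← hfinal]
    exact mul_le_mul_right (core_wlog h) _
  · have hsym : (fun t : ℝ => ENNReal.ofReal ((min 1 (x^2/t) - min 1 (y^2/t))^2))
        = (fun t : ℝ => ENNReal.ofReal ((min 1 (y^2/t) - min 1 (x^2/t))^2)) := by
      funext t
      congr 1
      ring
    rw [hsym, ← hfinal]
    refine mul_le_mul_right ((core_wlog h).trans (ENNReal.ofReal_le_ofReal ?_)) _
    nlinarith [sq_nonneg (x-y)]

private lemma orlicz_dual_bound {S : Type*} [Countable S] (ν : S → ℝ) (hν : ∀ x, 0 ≤ ν x)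
    (hνs : Summable ν) (hν1 : ∑' x, ν x = 1)
    (Φ : ℝ → ℝ≥0∞) (K : ℝ≥0∞)
    (g : S → ℝ) (hg : ∀ x, 0 ≤ g x)
    (hgK : ∑' x, ENNReal.ofReal (ν x) * legendreDual Φ (g x) ≤ K)
    (A : Set S) :
    (∑' x : A, ENNReal.ofReal (ν x * g x))
      ≤ (∑' x : A, ENNReal.ofReal (ν x)) *
          pseudoInv (legendreDual Φ) (K / ∑' x : A, ENNReal.ofReal (ν x)) := by
  set m : ℝ≥0∞ := ∑' x : A, ENNReal.ofReal (ν x) with hm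
  have hm_le : m ≤ 1 := by
    rw [hm, tsum_subtype A (fun x => ENNReal.ofReal (ν x))]
    calc ∑' x, A.indicator (fun x => ENNReal.ofReal (ν x)) x
        ≤ ∑' x, ENNReal.ofReal (ν x) :=
          ENNReal.tsum_le_tsum (fun x => Set.indicator_le_self _ _ x)
      _ = ENNReal.ofReal (∑' x, ν x) := (ENNReal.ofReal_tsum_of_nonneg hν hνs).symm
      _ = 1 := by rw [hν1]; simp
  have hmtop : m ≠ ⊤ := (lt_of_le_of_lt hm_le ENNReal.one_lt_top).ne
  by_cases hm0 : m = 0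
  · have hz : (∑' x : A, ENNReal.ofReal (ν x * g x)) = 0 := by
      rw [ENNReal.tsum_eq_zero]
      intro x
      have hx := ENNReal.tsum_eq_zero.mp hm0 x
      have hx0 : ν x = 0 :=
        le_antisymm (by simpa [ENNReal.ofReal_eq_zero] using hx) (hν x)
      simp [hx0]
    rw [hz]
    exact zero_le
  · set T : ℝ≥0∞ := ∑' x : A, ENNReal.ofReal (ν x * g x) with hT
    suffices h : ∀ s : ℝ, 0 ≤ s → K / m < legendreDual Φ s → T ≤ m * ENNReal.ofReal s by
      have hdiv : T / m ≤ pseudoInv (legendreDual Φ) (K / m) := by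
        apply le_sInf
        rintro b ⟨s, ⟨hs0, hslt⟩, rfl⟩
        rw [ENNReal.div_le_iff_le_mul (Or.inl hm0) (Or.inl hmtop)]
        exact (h s hs0 hslt).trans (le_of_eq (mul_comm _ _))
      calc T = m * (T / m) := (ENNReal.mul_div_cancel hm0 hmtop).symm
        _ ≤ m * pseudoInv (legendreDual Φ) (K / m) := mul_le_mul_right hdiv m
    intro s hs0 hlt
    rw [legendreDual, lt_iSup_iff] at hlt
    obtain ⟨⟨r, hr⟩, hlt2⟩ := hlt
    have hr0 : (0:ℝ) ≤ r := hr
    have hΦr : Φ r ≠ ⊤ := by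
      intro hh
      rw [hh, ENNReal.sub_top] at hlt2
      exact ENNReal.not_lt_zero hlt2
    have hlt3 : K / m + Φ r < ENNReal.ofReal (r * s) := lt_tsub_iff_right.mp hlt2
    have hrpos : 0 < r := by
      rcases eq_or_lt_of_le hr0 with h0 | h0
      · exfalso
        rw [← h0] at hlt3
        simp at hlt3
      · exact h0
    have young : ∀ x : S, ENNReal.ofReal (r * g x) ≤ Φ r + legendreDual Φ (g x) := by
      intro x
      have hle : ENNReal.ofReal (r * g x) - Φ r ≤ legendreDual Φ (g x) :=
        le_iSup_of_le ⟨r, hr⟩ le_rfl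
      exact tsub_le_iff_left.mp hle
    have key : ENNReal.ofReal r * T ≤ m * Φ r + K := by
      have s1 : ENNReal.ofReal r * T = ∑' x : A, ENNReal.ofReal (ν x) * ENNReal.ofReal (r * g x) := by
        rw [hT, ← ENNReal.tsum_mul_left]
        refine tsum_congr fun x => ?_
        rw [← ENNReal.ofReal_mul hr0, ← ENNReal.ofReal_mul (hν x)]
        congr 1
        ring
      rw [s1]
      calc ∑' x : A, ENNReal.ofReal (ν x) * ENNReal.ofReal (r * g x)
          ≤ ∑' x : A, ENNReal.ofReal (ν x) * (Φ r + legendreDual Φ (g x)) :=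
            ENNReal.tsum_le_tsum (fun x => mul_le_mul_right (young x) _)
        _ = (∑' x : A, ENNReal.ofReal (ν x) * Φ r)
            + ∑' x : A, ENNReal.ofReal (ν x) * legendreDual Φ (g x) := by
            simp_rw [mul_add]
            exact ENNReal.tsum_add
        _ ≤ m * Φ r + K := by
            refine add_le_add (le_of_eq ?_) ?_
            · rw [ENNReal.tsum_mul_right, hm]
            · rw [tsum_subtype A (fun x => ENNReal.ofReal (ν x) * legendreDual Φ (g x))]
              refine le_trans (ENNReal.tsum_le_tsum (fun x => Set.indicator_le_self _ _ x)) hgK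
    have hrne : ENNReal.ofReal r ≠ 0 := by
      simp [ENNReal.ofReal_eq_zero, not_le, hrpos]
    have final : ENNReal.ofReal r * T < ENNReal.ofReal r * (m * ENNReal.ofReal s) := by
      apply lt_of_le_of_lt key
      have hmul := (ENNReal.mul_lt_mul_iff_right hm0 hmtop).mpr hlt3
      calc m * Φ r + K = m * (K / m + Φ r) := by
            rw [mul_add, ENNReal.mul_div_cancel hm0 hmtop, add_comm]
        _ < m * ENNReal.ofReal (r * s) := hmul
        _ = ENNReal.ofReal r * (m * ENNReal.ofReal s) := by
            rw [ENNReal.ofReal_mul hr0]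
            ring
    exact le_of_lt ((ENNReal.mul_lt_mul_iff_right hrne ENNReal.ofReal_ne_top).mp final)

end

/-- Measure-capacity inequality implies the Orlicz–Birnbaum estimate:
if `ν[A] Ψ⁻¹(K/ν[A]) ≤ C cap(A,B)` for all `A ⊆ S\B`, then
`‖f²‖_{Φ,ν,K} ≤ 4C E(f)` for every `f ∈ ℓ²(μ)` vanishing on `B`. -/
theorem orliczNorm_le_of_measure_capacity {S : Type*} [Countable S]
    (μ : S → ℝ) (p : S → S → ℝ)
    (hμ : ∀ x, 0 ≤ μ x) (hμ1 : ∑' x, μ x = 1)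
    (hp : ∀ x y, 0 ≤ p x y)
    (hdb : ∀ x y, μ x * p x y = μ y * p y x)
    (ν : S → ℝ) (hν : ∀ x, 0 ≤ ν x) (hν1 : ∑' x, ν x = 1)
    (Φ Ψ : ℝ → ℝ≥0∞) (hΦ : IsYoung Φ) (hΨ : Ψ = legendreDual Φ)
    (K : ℝ≥0∞) (hK : 0 < K)
    (B : Set S) (hB : B.Nonempty) (C : ℝ≥0∞)
    (hMC : ∀ A : Set S, A ⊆ Bᶜ →
      measOf ν A * pseudoInv Ψ (K / measOf ν A) ≤ C * capacity μ p A B) :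
    ∀ f : S → ℝ, Summable (fun x => μ x * f x ^ 2) → (∀ x ∈ B, f x = 0) →
      orliczNorm ν Ψ K (fun x => f x ^ 2) ≤ 4 * C * dirichletForm μ p f := by

  subst hΨ
  intro f hf2 hfB
  have hνs : Summable ν := by
    by_contra h
    rw [tsum_eq_zero_of_not_summable h] at hν1
    exact one_ne_zero hν1.symm
  rw [orliczNorm]
  apply iSup_le
  rintro ⟨g, hg, hgK⟩
  simp only
  -- Step 1: layer cake
  have step1 : (∑' x, ENNReal.ofReal (ν x * |f x ^ 2| * g x))
      = ∫⁻ t : ℝ, ∑' x, (Set.Ioo (0:ℝ) (f x ^ 2)).indicator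
          (fun _ => ENNReal.ofReal (ν x * g x)) t := by
    rw [lintegral_tsum (fun x => (measurable_const.indicator measurableSet_Ioo).aemeasurable)]
    refine tsum_congr fun x => ?_
    rw [lintegral_indicator_const measurableSet_Ioo, Real.volume_Ioo, sub_zero,
      ← ENNReal.ofReal_mul (mul_nonneg (hν x) (hg x))]
    congr 1
    rw [abs_of_nonneg (sq_nonneg (f x))]
    ring
  rw [step1]
  -- Step 2: pointwise capacity bound
  have step2 : ∀ t : ℝ,
      (∑' x, (Set.Ioo (0:ℝ) (f x ^ 2)).indicator (fun _ => ENNReal.ofReal (ν x * g x)) t)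
      ≤ (Set.Ioi (0:ℝ)).indicator
          (fun t => C * dirichletForm μ p (fun x => min 1 (f x ^ 2 / t))) t := by
    intro t
    by_cases ht : t ∈ Set.Ioi (0:ℝ)
    · have ht0 : (0:ℝ) < t := ht
      have hA : {x : S | t < f x ^ 2} ⊆ Bᶜ := by
        intro x hx hxB
        have h0 : f x = 0 := hfB x hxB
        rw [Set.mem_setOf_eq, h0] at hx
        simp at hx
        linarith
      have hrw : (∑' x, (Set.Ioo (0:ℝ) (f x ^ 2)).indicator
            (fun _ => ENNReal.ofReal (ν x * g x)) t)
          = ∑' x : {x : S | t < f x ^ 2}, ENNReal.ofReal (ν x * g x) := by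
        rw [tsum_subtype {x : S | t < f x ^ 2} (fun x => ENNReal.ofReal (ν x * g x))]
        refine tsum_congr fun x => ?_
        rw [Set.indicator_apply, Set.indicator_apply]
        by_cases hx : t < f x ^ 2
        · simp [Set.mem_Ioo, ht0, hx]
        · simp [Set.mem_Ioo, ht0, hx]
      rw [hrw, Set.indicator_of_mem ht]
      have hcap : capacity μ p {x : S | t < f x ^ 2} B
          ≤ dirichletForm μ p (fun x => min 1 (f x ^ 2 / t)) := by
        refine iInf_le_of_le ⟨fun x => min 1 (f x ^ 2 / t), ?_, ?_, ?_⟩ le_rfl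
        · intro x hx
          exact min_eq_left ((le_div_iff₀ ht0).mpr (by simpa using le_of_lt hx))
        · intro x hx
          show min 1 (f x ^ 2 / t) = 0
          rw [hfB x hx]
          norm_num
        · intro x
          constructor
          · exact le_min zero_le_one (div_nonneg (sq_nonneg _) ht0.le)
          · exact min_le_left _ _
      calc (∑' x : {x : S | t < f x ^ 2}, ENNReal.ofReal (ν x * g x))
          ≤ measOf ν {x : S | t < f x ^ 2} *
              pseudoInv (legendreDual Φ) (K / measOf ν {x : S | t < f x ^ 2}) :=
            orlicz_dual_bound ν hν hνs hν1 Φ K g hg hgK _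
        _ ≤ C * capacity μ p {x : S | t < f x ^ 2} B := hMC _ hA
        _ ≤ C * dirichletForm μ p (fun x => min 1 (f x ^ 2 / t)) := mul_le_mul_right hcap C
    · have hz : ∀ x : S, (Set.Ioo (0:ℝ) (f x ^ 2)).indicator
          (fun _ => ENNReal.ofReal (ν x * g x)) t = 0 := by
        intro x
        exact Set.indicator_of_notMem (fun hmem => ht hmem.1) _
      simp only [hz, tsum_zero]
      exact zero_le
  refine le_trans (lintegral_mono step2) ?_
  -- Step 3
  have hmin_meas : ∀ c : ℝ, Measurable (fun t : ℝ => min 1 (c / t)) :=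
    fun c => measurable_const.min (measurable_const.div measurable_id)
  have hq_meas : ∀ q : S × S, Measurable (fun t : ℝ =>
      ENNReal.ofReal (μ q.1 * p q.1 q.2 *
        (min 1 (f q.1 ^ 2 / t) - min 1 (f q.2 ^ 2 / t)) ^ 2)) := by
    intro q
    exact ENNReal.measurable_ofReal.comp
      ((((hmin_meas (f q.1 ^ 2)).sub (hmin_meas (f q.2 ^ 2))).pow_const 2).const_mul _)
  have hiden : ∀ t : ℝ, (Set.Ioi (0:ℝ)).indicator
      (fun t => C * dirichletForm μ p (fun x => min 1 (f x ^ 2 / t))) t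
      = C * ((1/2 : ℝ≥0∞) * ∑' q : S × S, (Set.Ioi (0:ℝ)).indicator
          (fun t => ENNReal.ofReal (μ q.1 * p q.1 q.2 *
            (min 1 (f q.1 ^ 2 / t) - min 1 (f q.2 ^ 2 / t)) ^ 2)) t) := by
    intro t
    by_cases ht : t ∈ Set.Ioi (0:ℝ)
    · rw [Set.indicator_of_mem ht, dirichletForm]
      congr 2
      exact tsum_congr fun q => (Set.indicator_of_mem ht
        (fun t => ENNReal.ofReal (μ q.1 * p q.1 q.2 *
          (min 1 (f q.1 ^ 2 / t) - min 1 (f q.2 ^ 2 / t)) ^ 2))).symm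
    · rw [Set.indicator_of_notMem ht]
      simp only [Set.indicator_of_notMem ht, tsum_zero, mul_zero]
  calc (∫⁻ t : ℝ, (Set.Ioi (0:ℝ)).indicator
        (fun t => C * dirichletForm μ p (fun x => min 1 (f x ^ 2 / t))) t)
      = C * ((1/2 : ℝ≥0∞) * ∑' q : S × S, ∫⁻ t : ℝ, (Set.Ioi (0:ℝ)).indicator
          (fun t => ENNReal.ofReal (μ q.1 * p q.1 q.2 *
            (min 1 (f q.1 ^ 2 / t) - min 1 (f q.2 ^ 2 / t)) ^ 2)) t) := by
        rw [lintegral_congr hiden,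
          lintegral_const_mul C (((Measurable.ennreal_tsum
            (fun q => (hq_meas q).indicator measurableSet_Ioi)).const_mul _)),
          lintegral_const_mul (1/2 : ℝ≥0∞) (Measurable.ennreal_tsum
            (fun q => (hq_meas q).indicator measurableSet_Ioi)),
          lintegral_tsum (fun q => ((hq_meas q).indicator measurableSet_Ioi).aemeasurable)]
    _ ≤ C * ((1/2 : ℝ≥0∞) * ∑' q : S × S,
          4 * ENNReal.ofReal (μ q.1 * p q.1 q.2 * (f q.1 - f q.2) ^ 2)) := by
        refine mul_le_mul_right (mul_le_mul_right (ENNReal.tsum_le_tsum fun q => ?_) _) C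
        exact pair_lintegral _ _ _ (mul_nonneg (hμ _) (hp _ _))
    _ = 4 * C * dirichletForm μ p f := by
        rw [ENNReal.tsum_mul_left, dirichletForm]
        ring
end

section
/- The elementary inequality ln(1/x) / ln(1 + e²/x) ≥ (1 − x)/ln(1 + e²) holds for all x ∈ (0,1]. -/
lemma key_ineq (x : ℝ) (hx0 : 0 < x) (hx1 : x ≤ 1) :
    2 * (1 - x) ≤ (-Real.log x) * (1 + x) := by
  set f : ℝ → ℝ := fun y => -((1 + y) * Real.log y) + 2 * y with hf
  have hD : Convex ℝ (Set.Ioi (0:ℝ)) := convex_Ioi 0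
  have hanti : AntitoneOn f (Set.Ioi 0) := by
    apply antitoneOn_of_deriv_nonpos hD
    · apply ContinuousOn.add
      · exact (ContinuousOn.mul (by fun_prop) (Real.continuousOn_log.mono
          (by intro y hy; exact ne_of_gt hy))).neg
      · fun_prop
    · intro y hy
      rw [interior_Ioi] at hy
      have hy0 : (0:ℝ) < y := hy
      apply DifferentiableAt.differentiableWithinAt
      exact (((differentiableAt_const _).add differentiableAt_fun_id).mul
        (Real.differentiableAt_log hy0.ne')).neg.add (by fun_prop)
    · intro y hy
      rw [interior_Ioi] at hy
      have hy0 : (0:ℝ) < y := hy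
      have H : HasDerivAt f (-(1 * Real.log y + (1 + y) * y⁻¹) + 2 * 1) y := by
        have h1 : HasDerivAt Real.log y⁻¹ y := Real.hasDerivAt_log hy0.ne'
        have h2 : HasDerivAt (fun y : ℝ => 1 + y) 1 y := (hasDerivAt_id y).const_add 1
        exact ((h2.mul h1).neg).add ((hasDerivAt_id y).const_mul 2)
      rw [H.deriv]
      have h1 : 1 - y⁻¹ ≤ Real.log y := Real.one_sub_inv_le_log_of_pos hy0
      have h2 : 0 < y⁻¹ := inv_pos.2 hy0
      have h3 : y * y⁻¹ = 1 := mul_inv_cancel₀ hy0.ne'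
      nlinarith
  have h := hanti (Set.mem_Ioi.2 hx0) (Set.mem_Ioi.2 one_pos) hx1
  simp only [hf, Real.log_one] at h
  nlinarith [h]

/-- The elementary inequality `ln(1/x)/ln(1+e²/x) ≥ (1−x)/ln(1+e²)` for `x ∈ (0,1]`. -/
theorem log_ratio_ineq (x : ℝ) (hx0 : 0 < x) (hx1 : x ≤ 1) :
    (1 - x) / Real.log (1 + Real.exp 2)
      ≤ Real.log (1 / x) / Real.log (1 + Real.exp 2 / x) := by
  have he : (0:ℝ) < Real.exp 2 := Real.exp_pos 2
  set L := Real.log (1 + Real.exp 2) with hLdef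
  set t := Real.log (1 / x) with htdef
  have ht : t = -Real.log x := by rw [htdef, one_div, Real.log_inv]
  have hlogx : Real.log x ≤ 0 := Real.log_nonpos hx0.le hx1
  have ht0 : 0 ≤ t := by rw [ht]; linarith
  have hL0 : 0 < L := Real.log_pos (by linarith)
  have hL2 : (2:ℝ) ≤ L := by
    rw [hLdef]
    calc (2:ℝ) = Real.log (Real.exp 2) := (Real.log_exp 2).symm
    _ ≤ Real.log (1 + Real.exp 2) := Real.log_le_log (Real.exp_pos 2) (by linarith)
  have hA0 : 0 < Real.log (1 + Real.exp 2 / x) :=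
    Real.log_pos (by have := div_pos he hx0; linarith)
  have hALt : Real.log (1 + Real.exp 2 / x) ≤ L + t := by
    have hx1' : 1 ≤ 1 / x := by rw [le_div_iff₀ hx0]; linarith
    have h1 : 1 + Real.exp 2 / x ≤ (1 + Real.exp 2) / x := by
      rw [add_div]
      have : (1:ℝ) ≤ 1 / x := hx1'
      linarith [this]
    calc Real.log (1 + Real.exp 2 / x) ≤ Real.log ((1 + Real.exp 2) / x) :=
          Real.log_le_log (by have := div_pos he hx0; linarith) h1
    _ = L + t := by
        rw [Real.log_div (by positivity) hx0.ne', ht, hLdef]; ring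
  have hkey : 2 * (1 - x) ≤ t * (1 + x) := by rw [ht]; exact key_ineq x hx0 hx1
  have ht1x : 1 - x ≤ t := by nlinarith
  rw [div_le_div_iff₀ hL0 hA0]
  calc (1 - x) * Real.log (1 + Real.exp 2 / x) ≤ (1 - x) * (L + t) := by
        apply mul_le_mul_of_nonneg_left hALt (by linarith)
  _ ≤ t * L := by nlinarith [mul_nonneg (by linarith : (0:ℝ) ≤ L - 2) (by linarith : (0:ℝ) ≤ t - (1 - x))]
end
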